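/- Let m ≥ 1, let κ = (k_1,…,k_m) be integers with k_1 ≥ … ≥ k_m ≥ 0, let A be an invertible m×m matrix over a field, and let B be an invertible m×m lower-triangular matrix over the same field. Then the generalized power satisfies q_κ(B⁻¹ A (B⁻¹)ᵀ) = q_κ(A) / q_κ(B Bᵀ), i.e., q_κ(B⁻¹ A (Bᵀ)⁻¹) · q_κ(B Bᵀ) = q_κ(A). -/

import Mathlib

open Matrix Finset

noncomputable section

/-- `nth κ j` is `κ j` when `j < m` and `0` otherwise. -/
def nth {m : ℕ} (κ : Fin m → ℕ) (j : ℕ) : ℕ := if h : j < m then κ ⟨j, h⟩ else 0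

/-- Determinant of the `k × k` leading principal submatrix (for `k ≤ m`). -/
def lpm {R : Type*} [CommRing R] {m : ℕ} (A : Matrix (Fin m) (Fin m) R) (k : ℕ) : R :=
  (Matrix.of fun r s : Fin (min k m) =>
    A (Fin.castLE (min_le_right k m) r) (Fin.castLE (min_le_right k m) s)).det

/-- The generalized power (highest weight vector)
`q_κ(A) = det(A)^{k_m} ∏_{i=1}^{m-1} det(A_i)^{k_i - k_{i+1}}`. -/
def gpow {R : Type*} [CommRing R] {m : ℕ} (κ : Fin m → ℕ) (A : Matrix (Fin m) (Fin m) R) : R :=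
  ∏ i : Fin m, lpm A ((i : ℕ) + 1) ^ (nth κ (i : ℕ) - nth κ ((i : ℕ) + 1))

section aux

variable {R : Type*} [CommRing R] {m : ℕ}

/-- The leading principal submatrix used in `lpm`. -/
def lps (A : Matrix (Fin m) (Fin m) R) (k : ℕ) : Matrix (Fin (min k m)) (Fin (min k m)) R :=
  Matrix.of fun r s : Fin (min k m) =>
    A (Fin.castLE (min_le_right k m) r) (Fin.castLE (min_le_right k m) s)

lemma lpm_eq_det_lps (A : Matrix (Fin m) (Fin m) R) (k : ℕ) : lpm A k = (lps A k).det := rfl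

lemma lps_mul_left (L M : Matrix (Fin m) (Fin m) R)
    (hL : ∀ i j : Fin m, i < j → L i j = 0) (k : ℕ) :
    lps (L * M) k = lps L k * lps M k := by
  ext r s
  show (L * M) _ _ = _
  rw [Matrix.mul_apply, Matrix.mul_apply]
  have : ∀ p : Fin m, p ∉ (univ : Finset (Fin (min k m))).map
      (Fin.castLEEmb (min_le_right k m)) →
      L (Fin.castLE (min_le_right k m) r) p * M p (Fin.castLE (min_le_right k m) s) = 0 := by
    intro p hp
    have hge : ¬ (p : ℕ) < min k m := by
      intro h
      exact hp (by simpa using ⟨⟨(p : ℕ), h⟩, by ext; simp⟩)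
    have : Fin.castLE (min_le_right k m) r < p :=
      Fin.lt_def.mpr (lt_of_lt_of_le r.2 (not_lt.mp hge))
    rw [hL _ _ this, zero_mul]
  rw [← Finset.sum_subset (Finset.subset_univ _) (fun p _ hp => this p hp),
    Finset.sum_map]
  rfl

lemma lps_mul_right (M U : Matrix (Fin m) (Fin m) R)
    (hU : ∀ i j : Fin m, j < i → U i j = 0) (k : ℕ) :
    lps (M * U) k = lps M k * lps U k := by
  ext r s
  show (M * U) _ _ = _
  rw [Matrix.mul_apply, Matrix.mul_apply]
  have : ∀ p : Fin m, p ∉ (univ : Finset (Fin (min k m))).map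
      (Fin.castLEEmb (min_le_right k m)) →
      M (Fin.castLE (min_le_right k m) r) p * U p (Fin.castLE (min_le_right k m) s) = 0 := by
    intro p hp
    have hge : ¬ (p : ℕ) < min k m := by
      intro h
      exact hp (by simpa using ⟨⟨(p : ℕ), h⟩, by ext; simp⟩)
    have : Fin.castLE (min_le_right k m) s < p :=
      Fin.lt_def.mpr (lt_of_lt_of_le s.2 (not_lt.mp hge))
    rw [hU _ _ this, mul_zero]
  rw [← Finset.sum_subset (Finset.subset_univ _) (fun p _ hp => this p hp),
    Finset.sum_map]
  rfl

lemma lps_one (k : ℕ) : lps (1 : Matrix (Fin m) (Fin m) R) k = 1 := by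
  ext r s
  show (1 : Matrix (Fin m) (Fin m) R) _ _ = _
  rw [Matrix.one_apply, Matrix.one_apply]
  simp [Fin.castLE_inj]

lemma lps_transpose (A : Matrix (Fin m) (Fin m) R) (k : ℕ) :
    lps Aᵀ k = (lps A k)ᵀ := rfl

lemma lpm_transpose (A : Matrix (Fin m) (Fin m) R) (k : ℕ) : lpm Aᵀ k = lpm A k := by
  rw [lpm_eq_det_lps, lpm_eq_det_lps, lps_transpose, Matrix.det_transpose]

end aux

/-- For `B` invertible lower triangular and `A` invertible, the generalized power satisfies
`q_κ(B⁻¹ A (B⁻¹)ᵀ) = q_κ(A) / q_κ(B Bᵀ)`, i.e. `q_κ(B⁻¹ A (Bᵀ)⁻¹) q_κ(B Bᵀ) = q_κ(A)`. -/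
theorem gpow_congr_inv_lowerTriangular {F : Type*} [Field F] {m : ℕ} (hm : 1 ≤ m)
    (κ : Fin m → ℕ) (hκ : Antitone κ)
    (A B : Matrix (Fin m) (Fin m) F)
    (hA : IsUnit A.det) (hB : IsUnit B.det)
    (hB_lower : ∀ i j : Fin m, i < j → B i j = 0) :
    gpow κ (B⁻¹ * A * (B⁻¹)ᵀ) = gpow κ A / gpow κ (B * Bᵀ)
    ∧ gpow κ (B⁻¹ * A * (Bᵀ)⁻¹) * gpow κ (B * Bᵀ) = gpow κ A := by
  haveI : Invertible B := B.invertibleOfIsUnitDet hB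
  -- B⁻¹ is lower triangular
  have hBt : BlockTriangular B (OrderDual.toDual : Fin m → (Fin m)ᵒᵈ) := by
    intro i j h
    exact hB_lower i j h
  have hBi_lower : ∀ i j : Fin m, i < j → B⁻¹ i j = 0 := by
    intro i j h
    exact blockTriangular_inv_of_blockTriangular hBt h
  have hBiT_upper : ∀ i j : Fin m, j < i → (B⁻¹)ᵀ i j = 0 := fun i j h => hBi_lower j i h
  have hBT_upper : ∀ i j : Fin m, j < i → Bᵀ i j = 0 := fun i j h => hB_lower j i h
  -- key minor identities
  have hone : ∀ k, lpm B⁻¹ k * lpm B k = 1 := by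
    intro k
    have := lps_mul_left B⁻¹ B hBi_lower k
    rw [Matrix.nonsing_inv_mul B hB, lps_one] at this
    rw [lpm_eq_det_lps, lpm_eq_det_lps, ← Matrix.det_mul, ← this, Matrix.det_one]
  have hX : ∀ k, lpm (B⁻¹ * A * (B⁻¹)ᵀ) k = lpm B⁻¹ k * lpm A k * lpm B⁻¹ k := by
    intro k
    rw [lpm_eq_det_lps, lps_mul_right _ _ hBiT_upper, lps_mul_left _ _ hBi_lower,
      Matrix.det_mul, Matrix.det_mul, ← lpm_eq_det_lps, ← lpm_eq_det_lps,
      ← lpm_eq_det_lps, ← lpm_transpose B⁻¹ k]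
  have hY : ∀ k, lpm (B * Bᵀ) k = lpm B k * lpm B k := by
    intro k
    rw [lpm_eq_det_lps, lps_mul_right _ _ hBT_upper, Matrix.det_mul,
      ← lpm_eq_det_lps, ← lpm_eq_det_lps, lpm_transpose]
  -- the product identity
  have hmain : gpow κ (B⁻¹ * A * (B⁻¹)ᵀ) * gpow κ (B * Bᵀ) = gpow κ A := by
    unfold gpow
    rw [← Finset.prod_mul_distrib]
    refine Finset.prod_congr rfl fun i _ => ?_
    rw [← mul_pow, hX, hY]
    have h1 := hone ((i : ℕ) + 1)
    have : lpm B⁻¹ ((i : ℕ) + 1) * lpm A ((i : ℕ) + 1) * lpm B⁻¹ ((i : ℕ) + 1) *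
        (lpm B ((i : ℕ) + 1) * lpm B ((i : ℕ) + 1)) =
        lpm A ((i : ℕ) + 1) * ((lpm B⁻¹ ((i : ℕ) + 1) * lpm B ((i : ℕ) + 1)) *
          (lpm B⁻¹ ((i : ℕ) + 1) * lpm B ((i : ℕ) + 1))) := by ring
    rw [this, h1, mul_one, mul_one]
  have hYunit : gpow κ (B * Bᵀ) ≠ 0 := by
    unfold gpow
    refine Finset.prod_ne_zero_iff.mpr fun i _ => pow_ne_zero _ ?_
    rw [hY]
    have hBu : IsUnit (lpm B ((i : ℕ) + 1)) :=
      IsUnit.of_mul_eq_one _ (mul_comm (lpm B⁻¹ _) (lpm B _) ▸ hone ((i : ℕ) + 1))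
    exact (hBu.mul hBu).ne_zero
  have htr : (B⁻¹)ᵀ = (Bᵀ)⁻¹ := (Matrix.transpose_nonsing_inv B).symm ▸ rfl
  constructor
  · rw [eq_div_iff hYunit]
    exact hmain
  · rw [← htr]
    exact hmain
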